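/- Fix α > 0, an integer n ≥ 1 and x₀ ∈ ℝ^n, and let f(x) = (α/π)^{n/4} e^{-(α/2)|x - x₀|²}. Then ∫_{ℝ^n} f² dx = 1 and equality holds in the parametric logarithmic-Sobolev inequality: ∫_{ℝ^n} f² log f² dx = -n + (n/2) log(α/π) + (1/α) ∫_{ℝ^n} |∇f|² dx. -/

import Mathlib

open Real MeasureTheory

lemma aux_int1d {b : ℝ} (hb : 0 < b) :
    Integrable (fun t : ℝ => t ^ 2 * rexp (-b * t ^ 2)) := by
  have := integrable_rpow_mul_exp_neg_mul_sq hb (s := 2) (by norm_num)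
  simpa [Real.rpow_natCast, show ((2:ℕ):ℝ) = (2:ℝ) by norm_num] using this

lemma aux_moment1 {b : ℝ} (hb : 0 < b) :
    ∫ t : ℝ, t ^ 2 * rexp (-b * t ^ 2) = (1 / (2 * b)) * Real.sqrt (π / b) := by
  have h1 : ∫ t : ℝ, t ^ 2 * rexp (-b * t ^ 2)
      = 2 * ∫ t in Set.Ioi (0:ℝ), t ^ 2 * rexp (-b * t ^ 2) := by
    rw [← integral_comp_abs (f := fun t => t ^ 2 * rexp (-b * t ^ 2))]
    congr 1 with t
    simp [sq_abs]
  have h2 := integral_rpow_mul_exp_neg_mul_rpow (p := 2) (q := 2)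
    (by norm_num) (by norm_num) hb
  have h2' : ∫ t in Set.Ioi (0:ℝ), t ^ 2 * rexp (-b * t ^ 2)
      = b ^ (-(3:ℝ)/2) * (1/2) * Real.Gamma (3/2) := by
    rw [show ((2:ℝ) = ((2:ℕ):ℝ)) by norm_num] at h2
    simp only [Real.rpow_natCast] at h2
    convert h2 using 2 <;> norm_num
  have hgamma : Real.Gamma (3/2) = Real.sqrt π / 2 := by
    have : (3:ℝ)/2 = 1/2 + 1 := by norm_num
    rw [this, Real.Gamma_add_one (by norm_num), Real.Gamma_one_half_eq]
    ring
  have hb3 : b ^ (-(3:ℝ)/2) = b⁻¹ * (Real.sqrt b)⁻¹ := by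
    rw [show (-(3:ℝ)/2) = (-1) + (-(1/2):ℝ) by norm_num, Real.rpow_add hb,
      Real.rpow_neg_one, Real.rpow_neg hb.le, ← Real.sqrt_eq_rpow]
  have hsb : Real.sqrt (π / b) = Real.sqrt π / Real.sqrt b := Real.sqrt_div pi_pos.le b
  rw [h1, h2', hgamma, hb3, hsb]
  have : Real.sqrt b ≠ 0 := ne_of_gt (Real.sqrt_pos.2 hb)
  field_simp

noncomputable def fc (b : ℝ) {n : ℕ} (i j : Fin n) : ℝ → ℝ :=
  if j = i then (fun t => t ^ 2 * rexp (-b * t ^ 2)) else (fun t => rexp (-b * t ^ 2))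

lemma fc_prod {b : ℝ} {n : ℕ} (i : Fin n) (x : Fin n → ℝ) :
    ∏ j, fc b i j (x j) = x i ^ 2 * rexp (-b * ∑ j, x j ^ 2) := by
  have h1 : ∏ j, fc b i j (x j)
      = fc b i i (x i) * ∏ j ∈ Finset.univ.erase i, fc b i j (x j) :=
    (Finset.mul_prod_erase Finset.univ _ (Finset.mem_univ i)).symm
  have h2 : ∏ j ∈ Finset.univ.erase i, fc b i j (x j)
      = ∏ j ∈ Finset.univ.erase i, rexp (-b * x j ^ 2) := by
    refine Finset.prod_congr rfl fun j hj => ?_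
    rw [fc, if_neg (Finset.ne_of_mem_erase hj)]
  have h3 : rexp (-b * ∑ j, x j ^ 2) = ∏ j, rexp (-b * x j ^ 2) := by
    rw [← Real.exp_sum]
    congr 1
    rw [Finset.mul_sum]
  rw [h1, h2, fc, if_pos rfl, h3,
    ← Finset.mul_prod_erase Finset.univ _ (Finset.mem_univ i), mul_assoc]

lemma fc_integrable {b : ℝ} (hb : 0 < b) {n : ℕ} (i j : Fin n) :
    Integrable (fc b i j) := by
  rw [fc]
  split_ifs
  · exact aux_int1d hb
  · exact integrable_exp_neg_mul_sq hb

lemma fc_int {b : ℝ} (hb : 0 < b) {n : ℕ} (i j : Fin n) :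
    ∫ t : ℝ, fc b i j t = if j = i then (1 / (2 * b)) * Real.sqrt (π / b)
      else Real.sqrt (π / b) := by
  rw [fc]
  split_ifs
  · exact aux_moment1 hb
  · exact integral_gaussian b

lemma pi_term_integrable {b : ℝ} (hb : 0 < b) {n : ℕ} (i : Fin n) :
    Integrable (fun x : Fin n → ℝ => x i ^ 2 * rexp (-b * ∑ j, x j ^ 2)) := by
  have := Integrable.fintype_prod (f := fc b i) (fun j => fc_integrable hb i j)
  refine this.congr (Filter.Eventually.of_forall fun x => ?_)
  exact fc_prod i x

lemma pi_term_integral {b : ℝ} (hb : 0 < b) {n : ℕ} (i : Fin n) :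
    ∫ x : Fin n → ℝ, x i ^ 2 * rexp (-b * ∑ j, x j ^ 2)
      = (1 / (2 * b)) * Real.sqrt (π / b) ^ n := by
  have h1 : ∫ x : Fin n → ℝ, x i ^ 2 * rexp (-b * ∑ j, x j ^ 2)
      = ∫ x : Fin n → ℝ, ∏ j, fc b i j (x j) := by
    congr 1 with x
    exact (fc_prod i x).symm
  rw [h1, integral_fintype_prod_volume_eq_prod (f := fc b i)]
  have h2 : ∀ j, ∫ t : ℝ, fc b i j t = if j = i then (1 / (2 * b)) * Real.sqrt (π / b)
      else Real.sqrt (π / b) := fc_int hb i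
  calc ∏ j, ∫ t : ℝ, fc b i j t
      = (∫ t : ℝ, fc b i i t) * ∏ j ∈ Finset.univ.erase i, ∫ t : ℝ, fc b i j t :=
        (Finset.mul_prod_erase Finset.univ _ (Finset.mem_univ i)).symm
    _ = ((1 / (2 * b)) * Real.sqrt (π / b)) * Real.sqrt (π / b) ^ (n - 1) := by
        rw [h2 i, if_pos rfl]
        congr 1
        rw [Finset.prod_congr rfl (fun j hj => by
          rw [h2 j, if_neg (Finset.ne_of_mem_erase hj)]), Finset.prod_const,
          Finset.card_erase_of_mem (Finset.mem_univ i), Finset.card_univ, Fintype.card_fin]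
    _ = (1 / (2 * b)) * Real.sqrt (π / b) ^ n := by
        have hn : 1 ≤ n := Nat.one_le_iff_ne_zero.2 (fun h => (h ▸ i).elim0)
        rw [mul_assoc, ← pow_succ']
        congr 2
        omega

lemma euclid_norm_sq {n : ℕ} (v : EuclideanSpace ℝ (Fin n)) :
    ‖v‖ ^ 2 = ∑ i, v i ^ 2 := by
  rw [EuclideanSpace.norm_eq, sq_sqrt (by positivity)]
  simp [sq_abs]

lemma euclid_moment_integrable {b : ℝ} (hb : 0 < b) {n : ℕ} :
    Integrable (fun v : EuclideanSpace ℝ (Fin n) => ‖v‖ ^ 2 * rexp (-b * ‖v‖ ^ 2)) := by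
  have hmp := (EuclideanSpace.volume_preserving_symm_measurableEquiv_toLp (Fin n)).symm
  rw [← MeasurePreserving.integrable_comp_emb hmp (MeasurableEquiv.measurableEmbedding _)]
  have : Integrable (fun x : Fin n → ℝ =>
      (∑ i, x i ^ 2) * rexp (-b * ∑ j, x j ^ 2)) := by
    have : (fun x : Fin n → ℝ => (∑ i, x i ^ 2) * rexp (-b * ∑ j, x j ^ 2))
        = fun x => ∑ i, x i ^ 2 * rexp (-b * ∑ j, x j ^ 2) := by
      funext x; rw [Finset.sum_mul]
    rw [this]
    exact integrable_finset_sum _ (fun i _ => pi_term_integrable hb i)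
  refine this.congr (Filter.Eventually.of_forall fun x => ?_)
  have hn : ‖(MeasurableEquiv.toLp 2 (Fin n → ℝ)).symm.symm x‖ ^ 2 = ∑ i, x i ^ 2 := by
    rw [euclid_norm_sq]
    rfl
  simp only [Function.comp_apply, hn]

lemma euclid_moment_integral {b : ℝ} (hb : 0 < b) {n : ℕ} :
    ∫ v : EuclideanSpace ℝ (Fin n), ‖v‖ ^ 2 * rexp (-b * ‖v‖ ^ 2)
      = ((n : ℝ) / (2 * b)) * (π / b) ^ ((n : ℝ) / 2) := by
  have hmp := (EuclideanSpace.volume_preserving_symm_measurableEquiv_toLp (Fin n)).symm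
  rw [← hmp.integral_comp (MeasurableEquiv.measurableEmbedding _)]
  have hn : ∀ x : Fin n → ℝ,
      ‖(MeasurableEquiv.toLp 2 (Fin n → ℝ)).symm.symm x‖ ^ 2 = ∑ i, x i ^ 2 := by
    intro x; rw [euclid_norm_sq]; rfl
  have h1 : ∫ x : Fin n → ℝ, ‖(MeasurableEquiv.toLp 2 (Fin n → ℝ)).symm.symm x‖ ^ 2
        * rexp (-b * ‖(MeasurableEquiv.toLp 2 (Fin n → ℝ)).symm.symm x‖ ^ 2)
      = ∑ i, ∫ x : Fin n → ℝ, x i ^ 2 * rexp (-b * ∑ j, x j ^ 2) := by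
    rw [← integral_finset_sum _ (fun i _ => pi_term_integrable hb i)]
    congr 1 with x
    rw [hn x, ← Finset.sum_mul]
  rw [h1]
  have h2 : ∀ i : Fin n, ∫ x : Fin n → ℝ, x i ^ 2 * rexp (-b * ∑ j, x j ^ 2)
      = (1 / (2 * b)) * Real.sqrt (π / b) ^ n := fun i => pi_term_integral hb i
  rw [Finset.sum_congr rfl (fun i _ => h2 i), Finset.sum_const, Finset.card_univ,
    Fintype.card_fin, nsmul_eq_mul]
  have h3 : Real.sqrt (π / b) ^ n = (π / b) ^ ((n : ℝ) / 2) := by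
    rw [Real.sqrt_eq_rpow, ← Real.rpow_natCast ((π / b) ^ ((1:ℝ)/2)) n,
      ← Real.rpow_mul (by positivity)]
    congr 1
    ring
  rw [h3]; ring

lemma euclid_exp_integrable {b : ℝ} (hb : 0 < b) {n : ℕ} :
    Integrable (fun v : EuclideanSpace ℝ (Fin n) => rexp (-b * ‖v‖ ^ 2)) := by
  have := (GaussianFourier.integrable_cexp_neg_mul_sq_norm_add_of_euclideanSpace
    (ι := Fin n) (b := (b : ℂ)) (by simpa using hb) 0 0).norm
  refine this.congr (Filter.Eventually.of_forall fun v => ?_)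
  simp only [zero_mul, add_zero, Complex.norm_exp]
  have : (-(b:ℂ) * (‖v‖:ℂ) ^ 2) = ((-b * ‖v‖ ^ 2 : ℝ) : ℂ) := by push_cast; ring
  rw [this, Complex.ofReal_re]

lemma euclid_exp_integral {b : ℝ} (hb : 0 < b) {n : ℕ} :
    ∫ v : EuclideanSpace ℝ (Fin n), rexp (-b * ‖v‖ ^ 2) = (π / b) ^ ((n : ℝ) / 2) := by
  have := GaussianFourier.integral_rexp_neg_mul_sq_norm (V := EuclideanSpace ℝ (Fin n)) hb
  simpa [finrank_euclideanSpace_fin] using this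

theorem gaussian_extremal_logSobolev (α : ℝ) (hα : 0 < α) (n : ℕ) (hn : 1 ≤ n)
    (x₀ : EuclideanSpace ℝ (Fin n))
    (f : EuclideanSpace ℝ (Fin n) → ℝ)
    (hf : ∀ x, f x = (α / π) ^ ((n : ℝ) / 4) * Real.exp (-(α / 2) * ‖x - x₀‖ ^ 2)) :
    (∫ x : EuclideanSpace ℝ (Fin n), f x ^ 2) = 1 ∧
    (∫ x : EuclideanSpace ℝ (Fin n), f x ^ 2 * Real.log (f x ^ 2)) =
      -(n : ℝ) + ((n : ℝ) / 2) * Real.log (α / π) +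
        (1 / α) * ∫ x : EuclideanSpace ℝ (Fin n), ‖gradient f x‖ ^ 2 := by
  have hdiv : 0 < α / π := div_pos hα pi_pos
  set c : ℝ := (α / π) ^ ((n:ℝ)/4) with hc
  have hcpos : 0 < c := rpow_pos_of_pos hdiv _
  have hc2 : c ^ 2 = (α / π) ^ ((n:ℝ)/2) := by
    rw [hc, ← Real.rpow_natCast ((α/π) ^ ((n:ℝ)/4)) 2, ← Real.rpow_mul hdiv.le]
    congr 1
    push_cast
    ring
  have hf2 : ∀ x, f x ^ 2 = c ^ 2 * rexp (-α * ‖x - x₀‖ ^ 2) := by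
    intro x
    rw [hf x, mul_pow]
    congr 1
    rw [← Real.exp_nat_mul]
    congr 1
    push_cast
    ring
  have hone : c ^ 2 * (π / α) ^ ((n:ℝ)/2) = 1 := by
    rw [hc2, ← Real.mul_rpow hdiv.le (by positivity)]
    have h : α / π * (π / α) = 1 := by
      field_simp
    rw [h, Real.one_rpow]
  -- translated integrals
  have hexpT : ∫ x : EuclideanSpace ℝ (Fin n), rexp (-α * ‖x - x₀‖ ^ 2)
      = (π / α) ^ ((n:ℝ)/2) := by
    rw [integral_sub_right_eq_self (μ := volume)
      (fun v : EuclideanSpace ℝ (Fin n) => rexp (-α * ‖v‖ ^ 2)) x₀]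
    exact euclid_exp_integral hα
  have hmomT : ∫ x : EuclideanSpace ℝ (Fin n), ‖x - x₀‖ ^ 2 * rexp (-α * ‖x - x₀‖ ^ 2)
      = ((n : ℝ) / (2 * α)) * (π / α) ^ ((n:ℝ)/2) := by
    rw [integral_sub_right_eq_self (μ := volume)
      (fun v : EuclideanSpace ℝ (Fin n) => ‖v‖ ^ 2 * rexp (-α * ‖v‖ ^ 2)) x₀]
    exact euclid_moment_integral hα
  have hexpTI : Integrable (fun x : EuclideanSpace ℝ (Fin n) => rexp (-α * ‖x - x₀‖ ^ 2)) :=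
    (euclid_exp_integrable hα).comp_sub_right x₀
  have hmomTI : Integrable
      (fun x : EuclideanSpace ℝ (Fin n) => ‖x - x₀‖ ^ 2 * rexp (-α * ‖x - x₀‖ ^ 2)) :=
    (euclid_moment_integrable hα).comp_sub_right x₀
  -- part 1
  have part1 : (∫ x : EuclideanSpace ℝ (Fin n), f x ^ 2) = 1 := by
    calc (∫ x : EuclideanSpace ℝ (Fin n), f x ^ 2)
        = ∫ x : EuclideanSpace ℝ (Fin n), c ^ 2 * rexp (-α * ‖x - x₀‖ ^ 2) := by
          congr 1 with x; exact hf2 x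
      _ = c ^ 2 * ∫ x : EuclideanSpace ℝ (Fin n), rexp (-α * ‖x - x₀‖ ^ 2) :=
          integral_const_mul _ _
      _ = 1 := by rw [hexpT]; exact hone
  refine ⟨part1, ?_⟩
  -- gradient
  have hgrad : ∀ x, ‖gradient f x‖ ^ 2
      = α ^ 2 * c ^ 2 * (‖x - x₀‖ ^ 2 * rexp (-α * ‖x - x₀‖ ^ 2)) := by
    intro x
    have hg : HasGradientAt f ((-α * f x) • (x - x₀)) x := by
      rw [hasGradientAt_iff_hasFDerivAt]
      have h1 : HasFDerivAt (fun y : EuclideanSpace ℝ (Fin n) => ‖y - x₀‖ ^ 2)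
          ((2:ℕ) • (innerSL ℝ (x - x₀))) x := by
        have h0 := ((hasFDerivAt_id x).sub_const x₀).norm_sq
        simpa using h0
      have h2 := ((h1.const_mul (-(α/2))).exp).const_mul c
      have hfe : (fun y : EuclideanSpace ℝ (Fin n)
          => c * rexp (-(α/2) * ‖y - x₀‖ ^ 2)) = f := by
        funext y; rw [hf y]
      rw [hfe] at h2
      refine h2.congr_fderiv ?_
      ext y
      simp only [InnerProductSpace.toDual_apply_apply, real_inner_smul_left,
        ContinuousLinearMap.coe_smul', Pi.smul_apply, innerSL_apply_apply, smul_eq_mul, hf x]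
      ring
    rw [hg.gradient, norm_smul, mul_pow, Real.norm_eq_abs, sq_abs]
    rw [show (-α * f x) ^ 2 * ‖x - x₀‖ ^ 2
      = α ^ 2 * f x ^ 2 * ‖x - x₀‖ ^ 2 from by ring, hf2 x]
    try ring
  have hgradint : ∫ x : EuclideanSpace ℝ (Fin n), ‖gradient f x‖ ^ 2
      = α * (n : ℝ) / 2 := by
    calc ∫ x : EuclideanSpace ℝ (Fin n), ‖gradient f x‖ ^ 2
        = ∫ x : EuclideanSpace ℝ (Fin n),
            α ^ 2 * c ^ 2 * (‖x - x₀‖ ^ 2 * rexp (-α * ‖x - x₀‖ ^ 2)) := by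
          congr 1 with x; exact hgrad x
      _ = α ^ 2 * c ^ 2 * (((n : ℝ) / (2 * α)) * (π / α) ^ ((n:ℝ)/2)) := by
          rw [integral_const_mul, hmomT]
      _ = α * (n : ℝ) / 2 := by
          have h : α ^ 2 * c ^ 2 * (((n : ℝ) / (2 * α)) * (π / α) ^ ((n:ℝ)/2))
              = α ^ 2 * ((n : ℝ) / (2 * α)) * (c ^ 2 * (π / α) ^ ((n:ℝ)/2)) := by ring
          rw [h, hone, mul_one]
          field_simp
  -- part 2
  have hlog : ∀ x, f x ^ 2 * Real.log (f x ^ 2)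
      = Real.log (c ^ 2) * rexp (-α * ‖x - x₀‖ ^ 2) * c ^ 2
        - α * c ^ 2 * (‖x - x₀‖ ^ 2 * rexp (-α * ‖x - x₀‖ ^ 2)) := by
    intro x
    rw [hf2 x, Real.log_mul (by positivity) (Real.exp_ne_zero _), Real.log_exp]
    ring
  have hL : Real.log (c ^ 2) = ((n:ℝ)/2) * Real.log (α / π) := by
    rw [hc2, Real.log_rpow hdiv]
  have lhs2 : (∫ x : EuclideanSpace ℝ (Fin n), f x ^ 2 * Real.log (f x ^ 2))
      = Real.log (c ^ 2) - (n : ℝ) / 2 := by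
    calc (∫ x : EuclideanSpace ℝ (Fin n), f x ^ 2 * Real.log (f x ^ 2))
        = ∫ x : EuclideanSpace ℝ (Fin n),
            (Real.log (c ^ 2) * rexp (-α * ‖x - x₀‖ ^ 2) * c ^ 2
              - α * c ^ 2 * (‖x - x₀‖ ^ 2 * rexp (-α * ‖x - x₀‖ ^ 2))) := by
          congr 1 with x; exact hlog x
      _ = (∫ x : EuclideanSpace ℝ (Fin n),
            Real.log (c ^ 2) * rexp (-α * ‖x - x₀‖ ^ 2) * c ^ 2)
          - ∫ x : EuclideanSpace ℝ (Fin n),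
            α * c ^ 2 * (‖x - x₀‖ ^ 2 * rexp (-α * ‖x - x₀‖ ^ 2)) := by
          apply integral_sub
          · exact ((hexpTI.const_mul _).mul_const _)
          · exact hmomTI.const_mul _
      _ = Real.log (c ^ 2) - (n : ℝ) / 2 := by
          have e1 : (∫ x : EuclideanSpace ℝ (Fin n),
              Real.log (c ^ 2) * rexp (-α * ‖x - x₀‖ ^ 2) * c ^ 2)
              = Real.log (c ^ 2) * ((π / α) ^ ((n:ℝ)/2) * c ^ 2) := by
            rw [show (fun x : EuclideanSpace ℝ (Fin n) =>
              Real.log (c ^ 2) * rexp (-α * ‖x - x₀‖ ^ 2) * c ^ 2)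
              = fun x => (Real.log (c ^ 2) * c ^ 2) * rexp (-α * ‖x - x₀‖ ^ 2) by
                funext x; ring]
            rw [integral_const_mul, hexpT]
            ring
          have e2 : (∫ x : EuclideanSpace ℝ (Fin n),
              α * c ^ 2 * (‖x - x₀‖ ^ 2 * rexp (-α * ‖x - x₀‖ ^ 2)))
              = α * c ^ 2 * (((n : ℝ) / (2 * α)) * (π / α) ^ ((n:ℝ)/2)) := by
            rw [integral_const_mul, hmomT]
          rw [e1, e2]
          have h3 : (π / α) ^ ((n:ℝ)/2) * c ^ 2 = 1 := by rw [mul_comm]; exact hone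
          have h4 : α * c ^ 2 * (((n : ℝ) / (2 * α)) * (π / α) ^ ((n:ℝ)/2))
              = α * ((n : ℝ) / (2 * α)) * (c ^ 2 * (π / α) ^ ((n:ℝ)/2)) := by ring
          rw [h3, h4, hone, mul_one, mul_one]
          congr 1
          field_simp
  rw [lhs2, hgradint, hL]
  field_simp
  ring
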